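/- Fix k ≥ 1. For graphs G and H, G ≡^{cs}ₛ H if and only if V(G) = V(H) and for every set C ⊆ V(G) with |C| < k, the families of vertex sets of connected components of G − C and H − C are the same. -/

import Mathlib

/-- Graphs are finite sets of edges, an edge being a 2-element subset of the
vertex type `V`. -/
abbrev EGraph (V : Type) [DecidableEq V] := Finset {e : Finset V // e.card = 2}

/-- The vertex set of a graph: all endpoints of its edges (no isolated vertices). -/
def EGraph.verts {V : Type} [DecidableEq V] (G : EGraph V) : Finset V :=
  G.sup (fun e => e.1)

/-- The simple graph on `V` determined by a finite edge set. -/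
def EGraph.toSG {V : Type} [DecidableEq V] (G : EGraph V) : SimpleGraph V :=
  SimpleGraph.fromRel (fun u v => ∃ e ∈ G, e.1 = ({u, v} : Finset V))

/-- `G − C`: delete the vertices of `C` and all incident edges. -/
def EGraph.delv {V : Type} [DecidableEq V] (G : EGraph V) (C : Finset V) :
    EGraph V :=
  G.filter (fun e => ∀ v ∈ e.1, v ∉ C)

/-- The family of vertex sets of connected components of `G`. -/
def EGraph.compSets {V : Type} [DecidableEq V] (G : EGraph V) : Set (Set V) :=
  {S | ∃ v ∈ EGraph.verts G, S = {u | (EGraph.toSG G).Reachable v u}}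

/-- `G` is connected. -/
def EGraph.Conn {V : Type} [DecidableEq V] (G : EGraph V) : Prop :=
  ∀ u ∈ EGraph.verts G, ∀ v ∈ EGraph.verts G, (EGraph.toSG G).Reachable u v

/-- `C` is a cutset of `G`: either `C = ∅` and `G` is disconnected, or `C` is
nonempty and separates some pair of vertices of `G` lying in a common
component, the pair surviving the deletion of `C`. -/
def EGraph.IsCutset {V : Type} [DecidableEq V] (G : EGraph V) (C : Finset V) :
    Prop :=
  (C = ∅ ∧ ¬ EGraph.Conn G) ∨
    (C.Nonempty ∧ ∃ x ∈ EGraph.verts G, ∃ y ∈ EGraph.verts G,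
      x ∉ C ∧ y ∉ C ∧ (EGraph.toSG G).Reachable x y ∧
        ¬ (EGraph.toSG (EGraph.delv G C)).Reachable x y)

/-- `G` has a cutset of cardinality smaller than `k`. -/
def EGraph.HasSmallCutset {V : Type} [DecidableEq V] (k : ℕ) (G : EGraph V) :
    Prop :=
  ∃ C : Finset V, C.card < k ∧ EGraph.IsCutset G C


set_option linter.unusedSectionVars false
set_option linter.unusedVariables false
set_option maxHeartbeats 1000000

namespace SC
variable {V : Type} [DecidableEq V]
open Finset SimpleGraph EGraph

lemma mem_verts {X : EGraph V} {u : V} : u ∈ X.verts ↔ ∃ e ∈ X, u ∈ e.1 := by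
  simp [EGraph.verts, Finset.mem_sup]

lemma edge_eq_pair {e : {e : Finset V // e.card = 2}} {p q : V}
    (hp : p ∈ e.1) (hq : q ∈ e.1) (hpq : p ≠ q) : e.1 = {p, q} := by
  symm
  apply Finset.eq_of_subset_of_card_le
  · intro x hx
    rcases Finset.mem_insert.mp hx with h | h
    · exact h ▸ hp
    · exact (Finset.mem_singleton.mp h) ▸ hq
  · rw [e.2, Finset.card_insert_of_notMem (by simp [hpq]), Finset.card_singleton]

lemma adj_iff {X : EGraph V} {u v : V} :
    (EGraph.toSG X).Adj u v ↔ u ≠ v ∧ ∃ e ∈ X, e.1 = ({u, v} : Finset V) := by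
  rw [EGraph.toSG, SimpleGraph.fromRel_adj]
  constructor
  · rintro ⟨hne, h | h⟩
    · exact ⟨hne, h⟩
    · rw [Finset.pair_comm] at h; exact ⟨hne, h⟩
  · rintro ⟨hne, h⟩; exact ⟨hne, Or.inl h⟩

lemma adj_of_mem {X : EGraph V} {e : {e : Finset V // e.card = 2}} (he : e ∈ X)
    {p q : V} (hp : p ∈ e.1) (hq : q ∈ e.1) (hpq : p ≠ q) :
    (EGraph.toSG X).Adj p q :=
  adj_iff.mpr ⟨hpq, e, he, edge_eq_pair hp hq hpq⟩

lemma mem_verts_of_adj {X : EGraph V} {u v : V} (h : (EGraph.toSG X).Adj u v) :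
    u ∈ X.verts ∧ v ∈ X.verts := by
  obtain ⟨hne, e, he, hee⟩ := adj_iff.mp h
  constructor <;> apply mem_verts.mpr ⟨e, he, by simp [hee]⟩

lemma exists_adj_of_mem_verts {X : EGraph V} {u : V} (h : u ∈ X.verts) :
    ∃ w, (EGraph.toSG X).Adj u w := by
  obtain ⟨e, he, hue⟩ := mem_verts.mp h
  obtain ⟨a, b, hab, habe⟩ := Finset.card_eq_two.mp e.2
  rcases (by rw [habe] at hue; simpa using hue : u = a ∨ u = b) with rfl | rfl
  · exact ⟨b, adj_of_mem he hue (by simp [habe]) hab⟩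
  · exact ⟨a, adj_of_mem he hue (by simp [habe]) (Ne.symm hab)⟩

lemma reach_closed {Γ : SimpleGraph V} {S : Set V}
    (hcl : ∀ x y, x ∈ S → Γ.Adj x y → y ∈ S) {x y : V}
    (hx : x ∈ S) (hr : Γ.Reachable x y) : y ∈ S := by
  obtain ⟨w⟩ := hr
  induction w with
  | nil => exact hx
  | cons h p ih => exact ih (hcl _ _ hx h)

lemma reach_mem_verts {X : EGraph V} {x y : V}
    (h : (EGraph.toSG X).Reachable x y) (hne : x ≠ y) :
    x ∈ X.verts ∧ y ∈ X.verts := by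
  obtain ⟨w⟩ := h
  cases w with
  | nil => exact absurd rfl hne
  | cons h p =>
    refine ⟨(mem_verts_of_adj h).1, ?_⟩
    have := p.reverse
    cases this with
    | nil => exact (mem_verts_of_adj h).2
    | cons h2 p2 => exact (mem_verts_of_adj h2.symm).2


lemma mem_delv {X : EGraph V} {C : Finset V} {e : {e : Finset V // e.card = 2}} :
    e ∈ X.delv C ↔ e ∈ X ∧ ∀ v ∈ e.1, v ∉ C := Finset.mem_filter

lemma adj_iff' {X : EGraph V} {u v : V} :
    (EGraph.toSG X).Adj u v ↔ u ≠ v ∧ ∃ e ∈ X, e.1 = ({u, v} : Finset V) := by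
  rw [EGraph.toSG, SimpleGraph.fromRel_adj]
  constructor
  · rintro ⟨hne, h | h⟩
    · exact ⟨hne, h⟩
    · rw [Finset.pair_comm] at h; exact ⟨hne, h⟩
  · rintro ⟨hne, h⟩; exact ⟨hne, Or.inl h⟩

lemma adj_delv {X : EGraph V} {C : Finset V} {u v : V} :
    (EGraph.toSG (X.delv C)).Adj u v ↔
      (EGraph.toSG X).Adj u v ∧ u ∉ C ∧ v ∉ C := by
  rw [adj_iff', adj_iff']
  constructor
  · rintro ⟨hne, e, he, hee⟩
    rcases mem_delv.mp he with ⟨heX, hC⟩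
    exact ⟨⟨hne, e, heX, hee⟩, hC u (by simp [hee]), hC v (by simp [hee])⟩
  · rintro ⟨⟨hne, e, he, hee⟩, hu, hv⟩
    refine ⟨hne, e, mem_delv.mpr ⟨he, ?_⟩, hee⟩
    intro w hw
    rcases (by rw [hee] at hw; simpa using hw : w = u ∨ w = v) with rfl | rfl
    · exact hu
    · exact hv

lemma delv_empty (X : EGraph V) : X.delv ∅ = X := by
  simp [EGraph.delv]

lemma delv_union (X Y : EGraph V) (C : Finset V) :
    (X ∪ Y).delv C = X.delv C ∪ Y.delv C := Finset.filter_union _ _ _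

lemma verts_union (X Y : EGraph V) : (X ∪ Y).verts = X.verts ∪ Y.verts :=
  Finset.sup_union

lemma verts_delv_subset (X : EGraph V) (C : Finset V) :
    (X.delv C).verts ⊆ X.verts := by
  intro u hu
  simp only [EGraph.verts, Finset.mem_sup] at hu ⊢
  obtain ⟨e, he, hue⟩ := hu
  exact ⟨e, (mem_delv.mp he).1, hue⟩

lemma toSG_union (X Y : EGraph V) :
    EGraph.toSG (X ∪ Y) = EGraph.toSG X ⊔ EGraph.toSG Y := by
  ext u v
  simp only [SimpleGraph.sup_adj, adj_iff', Finset.mem_union]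
  aesop

lemma reachable_sup {A B : SimpleGraph V} {x y : V} :
    (A ⊔ B).Reachable x y ↔
      Relation.ReflTransGen (fun u v => A.Reachable u v ∨ B.Reachable u v) x y := by
  constructor
  · rintro ⟨w⟩
    induction w with
    | nil => exact Relation.ReflTransGen.refl
    | cons h p ih =>
      refine Relation.ReflTransGen.head ?_ ih
      rcases h with h | h
      · exact Or.inl h.reachable
      · exact Or.inr h.reachable
  · intro h
    induction h with
    | refl => exact Reachable.refl _
    | tail _ h2 ih =>
      refine ih.trans ?_
      rcases h2 with h2 | h2
      · exact h2.mono le_sup_left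
      · exact h2.mono le_sup_right

lemma reach_union_congr {X Y F : EGraph V}
    (h : ∀ x y, (EGraph.toSG X).Reachable x y ↔ (EGraph.toSG Y).Reachable x y)
    (x y : V) :
    (EGraph.toSG (X ∪ F)).Reachable x y ↔ (EGraph.toSG (Y ∪ F)).Reachable x y := by
  rw [toSG_union, toSG_union, reachable_sup, reachable_sup]
  constructor <;>
  · intro hr
    refine Relation.ReflTransGen.mono ?_ _ _ hr
    intro u v huv
    rcases huv with h1 | h1
    · exact Or.inl (by first | exact (h u v).mp h1 | exact (h u v).mpr h1)
    · exact Or.inr h1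

lemma exists_disjoint_card [Infinite V] (W : Finset V) (n : ℕ) :
    ∃ A : Finset V, Disjoint A W ∧ A.card = n := by
  induction n with
  | zero => exact ⟨∅, by simp, rfl⟩
  | succ m ih =>
    obtain ⟨A, hA, hcard⟩ := ih
    obtain ⟨x, hx⟩ := Infinite.exists_notMem_finset (A ∪ W)
    simp only [Finset.mem_union, not_or] at hx
    refine ⟨insert x A, ?_, by rw [Finset.card_insert_of_notMem hx.1, hcard]⟩
    rw [Finset.disjoint_left]
    intro a ha
    rcases Finset.mem_insert.mp ha with rfl | ha
    · exact hx.2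
    · exact Finset.disjoint_left.mp hA ha


/-- A crossing edge of `X` between `U` and its complement in `Wf`, avoiding `C`. -/
def Cross (X : EGraph V) (C U Wf : Finset V) : Prop :=
  ∃ e ∈ X, ∃ p ∈ e.1, ∃ q ∈ e.1,
    p ∈ U ∧ q ∈ Wf ∧ q ∉ U ∧ p ∉ C ∧ q ∉ C

lemma cross_pad {X : EGraph V} {C D U Wf : Finset V} (hUW : U ⊆ Wf)
    (hD : Disjoint D Wf) : Cross X (C ∪ D) U Wf ↔ Cross X C U Wf := by
  unfold Cross
  constructor
  · rintro ⟨e, he, p, hp, q, hq, h1, h2, h3, h4, h5⟩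
    exact ⟨e, he, p, hp, q, hq, h1, h2, h3,
      fun h => h4 (Finset.mem_union_left _ h),
      fun h => h5 (Finset.mem_union_left _ h)⟩
  · rintro ⟨e, he, p, hp, q, hq, h1, h2, h3, h4, h5⟩
    refine ⟨e, he, p, hp, q, hq, h1, h2, h3, ?_, ?_⟩
    · rw [Finset.mem_union]
      rintro (h | h)
      · exact h4 h
      · exact absurd (hUW h1) (Finset.disjoint_left.mp hD h)
    · rw [Finset.mem_union]
      rintro (h | h)
      · exact h5 h
      · exact absurd h2 (Finset.disjoint_left.mp hD h)

lemma cross_adj {X : EGraph V} {C U Wf : Finset V} (h : Cross X C U Wf) :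
    ∃ p q, p ∈ U ∧ p ∉ C ∧ q ∈ Wf ∧ q ∉ U ∧ q ∉ C ∧
      (EGraph.toSG (X.delv C)).Adj p q := by
  obtain ⟨e, he, p, hp, q, hq, h1, h2, h3, h4, h5⟩ := h
  have hpq : p ≠ q := fun h => h3 (h ▸ h1)
  refine ⟨p, q, h1, h4, h2, h3, h5, adj_delv.mpr ⟨adj_of_mem he hp hq hpq, h4, h5⟩⟩

lemma mem_verts_delv_iff {X : EGraph V} {C Wf : Finset V} (hXW : X.verts ⊆ Wf)
    {u : V} : u ∈ (X.delv C).verts ↔ u ∉ C ∧ Cross X C {u} Wf := by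
  constructor
  · intro hu
    obtain ⟨e, he, hue⟩ := mem_verts.mp hu
    obtain ⟨heX, hC⟩ := mem_delv.mp he
    obtain ⟨a, b, hab, habe⟩ := Finset.card_eq_two.mp e.2
    have huC : u ∉ C := hC u hue
    refine ⟨huC, ?_⟩
    rcases (by rw [habe] at hue; simpa using hue : u = a ∨ u = b) with rfl | rfl
    · exact ⟨e, heX, u, hue, b, by simp [habe], by simp, hXW (mem_verts.mpr ⟨e, heX, by simp [habe]⟩),
        by simp [hab.symm], huC, hC b (by simp [habe])⟩
    · exact ⟨e, heX, u, hue, a, by simp [habe], by simp, hXW (mem_verts.mpr ⟨e, heX, by simp [habe]⟩),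
        by simp [hab], huC, hC a (by simp [habe])⟩
  · rintro ⟨huC, e, he, p, hp, q, hq, h1, h2, h3, h4, h5⟩
    have hpu : p = u := Finset.mem_singleton.mp h1
    subst hpu
    have hpq : p ≠ q := fun h => h3 (h ▸ h1)
    refine mem_verts.mpr ⟨e, mem_delv.mpr ⟨he, ?_⟩, hp⟩
    intro w hw
    have := edge_eq_pair hp hq hpq
    rcases (by rw [this] at hw; simpa using hw : w = p ∨ w = q) with rfl | rfl
    · exact h4
    · exact h5

open Classical in
lemma reach_delv_iff {X : EGraph V} {C Wf : Finset V} (hXW : X.verts ⊆ Wf)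
    {x y : V} (hxy : x ≠ y) :
    (EGraph.toSG (X.delv C)).Reachable x y ↔
      x ∈ (X.delv C).verts ∧ y ∈ (X.delv C).verts ∧
        ∀ U : Finset V, U ⊆ Wf → ¬ Cross X C U Wf → (x ∈ U ↔ y ∈ U) := by
  constructor
  · intro hr
    obtain ⟨hx, hy⟩ := reach_mem_verts hr hxy
    refine ⟨hx, hy, ?_⟩
    intro U hUW hcr
    have hcl : ∀ a b : V, a ∈ (↑U : Set V) → (EGraph.toSG (X.delv C)).Adj a b →
        b ∈ (↑U : Set V) := by
      intro a b ha hab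
      obtain ⟨habX, haC, hbC⟩ := adj_delv.mp hab
      obtain ⟨hne, e, he, hee⟩ := adj_iff'.mp habX
      by_contra hbU
      exact hcr ⟨e, he, a, by simp [hee], b, by simp [hee], ha, hXW
        (mem_verts_of_adj habX).2, hbU, haC, hbC⟩
    constructor
    · intro hxU; exact reach_closed hcl hxU hr
    · intro hyU; exact reach_closed hcl hyU hr.symm
  · rintro ⟨hx, hy, hU⟩
    set U : Finset V := Wf.filter (fun u => (EGraph.toSG (X.delv C)).Reachable x u) with hUdef
    have hxW : x ∈ Wf := hXW (verts_delv_subset _ _ hx)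
    have hxU : x ∈ U := by
      rw [hUdef, Finset.mem_filter]; exact ⟨hxW, Reachable.refl _⟩
    by_contra hnr
    have hcr : ¬ Cross X C U Wf := by
      rintro ⟨e, he, p, hp, q, hq, h1, h2, h3, h4, h5⟩
      have hpq : p ≠ q := fun h => h3 (h ▸ h1)
      have hadj : (EGraph.toSG (X.delv C)).Adj p q := by
        refine adj_delv.mpr ⟨adj_of_mem he hp hq hpq, h4, h5⟩
      have hrp : (EGraph.toSG (X.delv C)).Reachable x p :=
        (Finset.mem_filter.mp (hUdef ▸ h1)).2
      exact h3 (by rw [hUdef, Finset.mem_filter]; exact ⟨h2, hrp.trans hadj.reachable⟩)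
    have := (hU U (Finset.filter_subset _ _) hcr).mp hxU
    exact hnr (Finset.mem_filter.mp this).2

lemma reach_iff_compSets {Y : EGraph V} {x y : V} :
    (EGraph.toSG Y).Reachable x y ↔
      x = y ∨ ∃ S ∈ EGraph.compSets Y, x ∈ S ∧ y ∈ S := by
  constructor
  · intro hr
    by_cases hxy : x = y
    · exact Or.inl hxy
    · obtain ⟨hx, _⟩ := reach_mem_verts hr hxy
      exact Or.inr ⟨{u | (EGraph.toSG Y).Reachable x u}, ⟨x, hx, rfl⟩,
        Reachable.refl _, hr⟩
  · rintro (rfl | ⟨S, ⟨v, hv, rfl⟩, hxS, hyS⟩)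
    · exact Reachable.refl _
    · exact (Reachable.symm hxS).trans hyS

lemma compSets_congr {Y Z : EGraph V} (hv : Y.verts = Z.verts)
    (hr : ∀ x y, (EGraph.toSG Y).Reachable x y ↔ (EGraph.toSG Z).Reachable x y) :
    EGraph.compSets Y = EGraph.compSets Z := by
  unfold EGraph.compSets
  ext S
  simp only [Set.mem_setOf_eq, hv]
  constructor <;>
  · rintro ⟨v, hv', rfl⟩
    refine ⟨v, hv', ?_⟩
    ext u
    simp only [Set.mem_setOf_eq]
    first | exact (hr v u).symm | exact hr v u


lemma adj_union {X F : EGraph V} {u v : V} :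
    (EGraph.toSG (X ∪ F)).Adj u v ↔
      (EGraph.toSG X).Adj u v ∨ (EGraph.toSG F).Adj u v := by
  rw [toSG_union]; rfl

/-- Edges allowed in the test graph. -/
def good (U C A B Wf : Finset V) (e : Finset V) : Prop :=
  e ⊆ (U \ C) ∪ A ∨ e ⊆ ((Wf \ U) \ C) ∪ B ∨
    ((e ∩ (A ∪ B)).Nonempty ∧ (e ∩ C).Nonempty)

instance (U C A B Wf : Finset V) : DecidablePred (good U C A B Wf) := by
  intro e; unfold good; infer_instance

/-- The test graph. -/
def testF (U C A B Wf : Finset V) : EGraph V :=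
  (((Wf ∪ C ∪ A ∪ B).powersetCard 2).filter (good U C A B Wf)).subtype
    (fun e => e.card = 2)

lemma mem_testF {U C A B Wf : Finset V} {e : {e : Finset V // e.card = 2}} :
    e ∈ testF U C A B Wf ↔ e.1 ⊆ Wf ∪ C ∪ A ∪ B ∧ good U C A B Wf e.1 := by
  rw [testF, Finset.mem_subtype, Finset.mem_filter, Finset.mem_powersetCard]
  have := e.2
  tauto

lemma adj_testF {U C A B Wf : Finset V} {u v : V} :
    (EGraph.toSG (testF U C A B Wf)).Adj u v ↔
      u ≠ v ∧ ({u, v} : Finset V) ⊆ Wf ∪ C ∪ A ∪ B ∧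
        good U C A B Wf ({u, v} : Finset V) := by
  rw [adj_iff']
  constructor
  · rintro ⟨hne, e, he, hee⟩
    obtain ⟨h1, h2⟩ := mem_testF.mp he
    exact ⟨hne, hee ▸ h1, hee ▸ h2⟩
  · rintro ⟨hne, h1, h2⟩
    exact ⟨hne, ⟨{u, v}, Finset.card_pair hne⟩, mem_testF.mpr ⟨h1, h2⟩, rfl⟩

/-- Hypotheses bundle for the test construction. -/
structure TSetup (k : ℕ) (X : EGraph V) (Wf U C A B : Finset V) : Prop where
  hk : 1 ≤ k
  hXW : X.verts ⊆ Wf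
  hUW : U ⊆ Wf
  hA : Disjoint A (Wf ∪ C)
  hB : Disjoint B (Wf ∪ C)
  hAB : Disjoint A B
  hAcard : A.card = k + 1
  hBcard : B.card = k + 1

namespace TSetup

variable {k : ℕ} {X : EGraph V} {Wf U C A B : Finset V}
  (st : TSetup k X Wf U C A B)
include st

lemma aWf {a : V} (ha : a ∈ A) : a ∉ Wf :=
  fun h => Finset.disjoint_left.mp st.hA ha (Finset.mem_union_left _ h)
lemma aC {a : V} (ha : a ∈ A) : a ∉ C :=
  fun h => Finset.disjoint_left.mp st.hA ha (Finset.mem_union_right _ h)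
lemma bWf {b : V} (hb : b ∈ B) : b ∉ Wf :=
  fun h => Finset.disjoint_left.mp st.hB hb (Finset.mem_union_left _ h)
lemma bC {b : V} (hb : b ∈ B) : b ∉ C :=
  fun h => Finset.disjoint_left.mp st.hB hb (Finset.mem_union_right _ h)

lemma pickA {C₀ : Finset V} (h : C₀.card ≤ k) : ∃ a ∈ A, a ∉ C₀ := by
  by_contra hc
  push_neg at hc
  have hsub : A ⊆ C₀ := fun a ha => hc a ha
  have h2 := Finset.card_le_card hsub
  have := st.hAcard
  omega

lemma pickB {C₀ : Finset V} (h : C₀.card ≤ k) : ∃ b ∈ B, b ∉ C₀ := by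
  by_contra hc
  push_neg at hc
  have : B ⊆ C₀ := fun b hb => hc b hb
  have h2 := Finset.card_le_card this
  have := st.hBcard
  omega


lemma adjY_side1 {u v : V} (hu : u ∈ U \ C ∪ A) (hv : v ∈ U \ C ∪ A)
    (hne : u ≠ v) : (EGraph.toSG (X ∪ testF U C A B Wf)).Adj u v := by
  refine adj_union.mpr (Or.inr (adj_testF.mpr ⟨hne, ?_, Or.inl ?_⟩))
  · intro x hx
    have hxe : x = u ∨ x = v := by simpa using hx
    have : x ∈ U \ C ∪ A := by rcases hxe with rfl | rfl <;> assumption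
    rcases Finset.mem_union.mp this with h | h
    · exact Finset.mem_union_left _ (Finset.mem_union_left _
        (Finset.mem_union_left _ (st.hUW (Finset.mem_sdiff.mp h).1)))
    · exact Finset.mem_union_left _ (Finset.mem_union_right _ h)
  · intro x hx
    have hxe : x = u ∨ x = v := by simpa using hx
    rcases hxe with rfl | rfl <;> assumption

lemma adjY_side2 {u v : V} (hu : u ∈ (Wf \ U) \ C ∪ B) (hv : v ∈ (Wf \ U) \ C ∪ B)
    (hne : u ≠ v) : (EGraph.toSG (X ∪ testF U C A B Wf)).Adj u v := by
  refine adj_union.mpr (Or.inr (adj_testF.mpr ⟨hne, ?_, Or.inr (Or.inl ?_)⟩))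
  · intro x hx
    have hxe : x = u ∨ x = v := by simpa using hx
    have : x ∈ (Wf \ U) \ C ∪ B := by rcases hxe with rfl | rfl <;> assumption
    rcases Finset.mem_union.mp this with h | h
    · exact Finset.mem_union_left _ (Finset.mem_union_left _
        (Finset.mem_union_left _ (Finset.mem_sdiff.mp (Finset.mem_sdiff.mp h).1).1))
    · exact Finset.mem_union_right _ h
  · intro x hx
    have hxe : x = u ∨ x = v := by simpa using hx
    rcases hxe with rfl | rfl <;> assumption

lemma adjY_bi {u c : V} (hu : u ∈ A ∪ B) (hc : c ∈ C) :
    (EGraph.toSG (X ∪ testF U C A B Wf)).Adj u c := by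
  have hne : u ≠ c := by
    rintro rfl
    rcases Finset.mem_union.mp hu with h | h
    · exact st.aC h hc
    · exact st.bC h hc
  refine adj_union.mpr (Or.inr (adj_testF.mpr ⟨hne, ?_, Or.inr (Or.inr ⟨⟨u, ?_⟩, ⟨c, ?_⟩⟩)⟩))
  · intro x hx
    have hxe : x = u ∨ x = c := by simpa using hx
    rcases hxe with rfl | rfl
    · rcases Finset.mem_union.mp hu with h | h
      · exact Finset.mem_union_left _ (Finset.mem_union_right _ h)
      · exact Finset.mem_union_right _ h
    · exact Finset.mem_union_left _ (Finset.mem_union_left _ (Finset.mem_union_right _ hc))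
  · simp [hu]
  · simp [hc]

lemma adjX_Y {u v : V} (h : (EGraph.toSG X).Adj u v) :
    (EGraph.toSG (X ∪ testF U C A B Wf)).Adj u v := adj_union.mpr (Or.inl h)

lemma vertsY_sub : (X ∪ testF U C A B Wf).verts ⊆ Wf ∪ C ∪ A ∪ B := by
  intro u hu
  rw [verts_union, Finset.mem_union] at hu
  rcases hu with hu | hu
  · exact Finset.mem_union_left _ (Finset.mem_union_left _
      (Finset.mem_union_left _ (st.hXW hu)))
  · obtain ⟨e, he, hue⟩ := mem_verts.mp hu
    exact (mem_testF.mp he).1 hue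

lemma a_mem_vertsY {a : V} (ha : a ∈ A) : a ∈ (X ∪ testF U C A B Wf).verts := by
  have hcard : 1 < A.card := by rw [st.hAcard]; exact Nat.lt_succ_of_le st.hk
  obtain ⟨a', ha', hne⟩ := Finset.exists_mem_ne hcard a
  exact (mem_verts_of_adj (st.adjY_side1 (Finset.mem_union_right _ ha')
    (Finset.mem_union_right _ ha) hne)).2

lemma b_mem_vertsY {b : V} (hb : b ∈ B) : b ∈ (X ∪ testF U C A B Wf).verts := by
  have hcard : 1 < B.card := by rw [st.hBcard]; exact Nat.lt_succ_of_le st.hk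
  obtain ⟨b', hb', hne⟩ := Finset.exists_mem_ne hcard b
  exact (mem_verts_of_adj (st.adjY_side2 (Finset.mem_union_right _ hb')
    (Finset.mem_union_right _ hb) hne)).2


lemma adjD {C₀ : Finset V} {u v : V}
    (h : (EGraph.toSG (X ∪ testF U C A B Wf)).Adj u v)
    (hu : u ∉ C₀) (hv : v ∉ C₀) :
    (EGraph.toSG ((X ∪ testF U C A B Wf).delv C₀)).Adj u v :=
  adj_delv.mpr ⟨h, hu, hv⟩

omit st in
lemma memZ_cases {x : V} (hz : x ∈ Wf ∪ C ∪ A ∪ B) (h1 : x ∉ C)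
    (h2 : x ∉ A) (h3 : x ∉ B) : x ∈ Wf := by
  simp only [Finset.mem_union] at hz
  tauto

lemma conn_of_c {C₀ : Finset V} {c : V} (hc : c ∈ C) (hcC₀ : c ∉ C₀)
    (hcard : C₀.card ≤ k) {x : V} (hx : x ∈ (X ∪ testF U C A B Wf).verts)
    (hxC₀ : x ∉ C₀) :
    (EGraph.toSG ((X ∪ testF U C A B Wf).delv C₀)).Reachable x c := by
  obtain ⟨a, haA, haC₀⟩ := st.pickA hcard
  have hz := st.vertsY_sub hx
  have hac : (EGraph.toSG ((X ∪ testF U C A B Wf).delv C₀)).Adj a c :=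
    st.adjD (st.adjY_bi (Finset.mem_union_left _ haA) hc) haC₀ hcC₀
  by_cases hxC : x ∈ C
  · exact ((st.adjD (st.adjY_bi (Finset.mem_union_left _ haA) hxC) haC₀
      hxC₀).symm.reachable).trans hac.reachable
  by_cases hxA : x ∈ A
  · exact (st.adjD (st.adjY_bi (Finset.mem_union_left _ hxA) hc) hxC₀ hcC₀).reachable
  by_cases hxB : x ∈ B
  · exact (st.adjD (st.adjY_bi (Finset.mem_union_right _ hxB) hc) hxC₀ hcC₀).reachable
  have hxW : x ∈ Wf := memZ_cases hz hxC hxA hxB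
  by_cases hxU : x ∈ U
  · have hxa : (EGraph.toSG ((X ∪ testF U C A B Wf).delv C₀)).Adj x a :=
      st.adjD (st.adjY_side1
        (Finset.mem_union_left _ (Finset.mem_sdiff.mpr ⟨hxU, hxC⟩))
        (Finset.mem_union_right _ haA)
        (fun h => st.aWf haA (h ▸ hxW))) hxC₀ haC₀
    exact hxa.reachable.trans hac.reachable
  · obtain ⟨b, hbB, hbC₀⟩ := st.pickB hcard
    have hxb : (EGraph.toSG ((X ∪ testF U C A B Wf).delv C₀)).Adj x b :=
      st.adjD (st.adjY_side2
        (Finset.mem_union_left _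
          (Finset.mem_sdiff.mpr ⟨Finset.mem_sdiff.mpr ⟨hxW, hxU⟩, hxC⟩))
        (Finset.mem_union_right _ hbB)
        (fun h => st.bWf hbB (h ▸ hxW))) hxC₀ hbC₀
    have hbc : (EGraph.toSG ((X ∪ testF U C A B Wf).delv C₀)).Adj b c :=
      st.adjD (st.adjY_bi (Finset.mem_union_right _ hbB) hc) hbC₀ hcC₀
    exact hxb.reachable.trans hbc.reachable

lemma conn_of_cross {C₀ : Finset V} (hsub : C ⊆ C₀) (hcard : C₀.card ≤ k)
    (hcr : Cross X C₀ U Wf) {a₀ : V} (ha₀A : a₀ ∈ A) (ha₀ : a₀ ∉ C₀)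
    {x : V} (hx : x ∈ (X ∪ testF U C A B Wf).verts) (hxC₀ : x ∉ C₀) :
    (EGraph.toSG ((X ∪ testF U C A B Wf).delv C₀)).Reachable x a₀ := by
  obtain ⟨p, q, hpU, hpC₀, hqW, hqU, hqC₀, hpq⟩ := cross_adj hcr
  have hpC : p ∉ C := fun h => hpC₀ (hsub h)
  have hqC : q ∉ C := fun h => hqC₀ (hsub h)
  have hpW : p ∈ Wf := st.hUW hpU
  have hpq' : (EGraph.toSG ((X ∪ testF U C A B Wf).delv C₀)).Adj p q := by
    obtain ⟨hX, h1, h2⟩ := adj_delv.mp hpq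
    exact st.adjD (st.adjX_Y hX) h1 h2
  have hpa : (EGraph.toSG ((X ∪ testF U C A B Wf).delv C₀)).Adj p a₀ :=
    st.adjD (st.adjY_side1
      (Finset.mem_union_left _ (Finset.mem_sdiff.mpr ⟨hpU, hpC⟩))
      (Finset.mem_union_right _ ha₀A)
      (fun h => st.aWf ha₀A (h ▸ hpW))) hpC₀ ha₀
  have hqa : (EGraph.toSG ((X ∪ testF U C A B Wf).delv C₀)).Reachable q a₀ :=
    hpq'.symm.reachable.trans hpa.reachable
  have hq2 : q ∈ (Wf \ U) \ C ∪ B :=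
    Finset.mem_union_left _
      (Finset.mem_sdiff.mpr ⟨Finset.mem_sdiff.mpr ⟨hqW, hqU⟩, hqC⟩)
  have hz := st.vertsY_sub hx
  by_cases hxC : x ∈ C
  · exact absurd (hsub hxC) hxC₀
  by_cases hxA : x ∈ A
  · by_cases hxa : x = a₀
    · exact hxa ▸ Reachable.refl _
    · exact (st.adjD (st.adjY_side1 (Finset.mem_union_right _ hxA)
        (Finset.mem_union_right _ ha₀A) hxa) hxC₀ ha₀).reachable
  by_cases hxB : x ∈ B
  · have hxq : (EGraph.toSG ((X ∪ testF U C A B Wf).delv C₀)).Adj x q :=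
      st.adjD (st.adjY_side2 (Finset.mem_union_right _ hxB) hq2
        (fun h => st.bWf hxB (h ▸ hqW))) hxC₀ hqC₀
    exact hxq.reachable.trans hqa
  have hxW : x ∈ Wf := memZ_cases hz hxC hxA hxB
  by_cases hxU : x ∈ U
  · exact (st.adjD (st.adjY_side1
      (Finset.mem_union_left _ (Finset.mem_sdiff.mpr ⟨hxU, hxC⟩))
      (Finset.mem_union_right _ ha₀A)
      (fun h => st.aWf ha₀A (h ▸ hxW))) hxC₀ ha₀).reachable
  · by_cases hxq : x = q
    · exact hxq ▸ hqa
    · have hx2 : x ∈ (Wf \ U) \ C ∪ B :=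
        Finset.mem_union_left _
          (Finset.mem_sdiff.mpr ⟨Finset.mem_sdiff.mpr ⟨hxW, hxU⟩, hxC⟩)
      exact (st.adjD (st.adjY_side2 hx2 hq2 hxq) hxC₀ hqC₀).reachable.trans hqa

lemma side1_closed {C₀ : Finset V} (hsub : C ⊆ C₀) (hcr : ¬ Cross X C₀ U Wf)
    {x y : V} (hxS : x ∈ (↑U ∪ ↑A : Set V))
    (h : (EGraph.toSG ((X ∪ testF U C A B Wf).delv C₀)).Adj x y) :
    y ∈ (↑U ∪ ↑A : Set V) := by
  obtain ⟨hY, hxC₀, hyC₀⟩ := adj_delv.mp h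
  have hxC : x ∉ C := fun hc => hxC₀ (hsub hc)
  have hyC : y ∉ C := fun hc => hyC₀ (hsub hc)
  rcases adj_union.mp hY with hX | hF
  · -- an edge of X
    have hxW : x ∈ X.verts := (mem_verts_of_adj hX).1
    have hyW : y ∈ X.verts := (mem_verts_of_adj hX).2
    have hxU : x ∈ U := by
      rcases hxS with hx | hx
      · exact hx
      · exact absurd (st.hXW hxW) (st.aWf hx)
    by_contra hyS
    have hyU : y ∉ U := fun h' => hyS (Or.inl h')
    obtain ⟨hne, e, he, hee⟩ := adj_iff'.mp hX
    exact hcr ⟨e, he, x, by simp [hee], y, by simp [hee], hxU,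
      st.hXW hyW, hyU, hxC₀, hyC₀⟩
  · -- an edge of F
    obtain ⟨hne, hZ, hgood⟩ := adj_testF.mp hF
    have hxmem : x ∈ ({x, y} : Finset V) := by simp
    have hymem : y ∈ ({x, y} : Finset V) := by simp
    rcases hgood with hg | hg | hg
    · have := hg hymem
      rcases Finset.mem_union.mp this with h' | h'
      · exact Or.inl (Finset.mem_sdiff.mp h').1
      · exact Or.inr h'
    · exfalso
      have hx2 := hg hxmem
      rcases hxS with hx | hx
      · rcases Finset.mem_union.mp hx2 with h' | h'
        · exact (Finset.mem_sdiff.mp (Finset.mem_sdiff.mp h').1).2 hx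
        · exact st.bWf h' (st.hUW hx)
      · rcases Finset.mem_union.mp hx2 with h' | h'
        · exact st.aWf hx (Finset.mem_sdiff.mp (Finset.mem_sdiff.mp h').1).1
        · exact Finset.disjoint_left.mp st.hAB hx h'
    · exfalso
      obtain ⟨z, hz⟩ := hg.2
      have hz2 := Finset.mem_inter.mp hz
      rcases (by simpa using hz2.1 : z = x ∨ z = y) with rfl | rfl
      · exact hxC hz2.2
      · exact hyC hz2.2

lemma side1_sep {C₀ : Finset V} (hsub : C ⊆ C₀) (hcr : ¬ Cross X C₀ U Wf)
    {a b : V} (ha : a ∈ A) (hb : b ∈ B) :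
    ¬ (EGraph.toSG ((X ∪ testF U C A B Wf).delv C₀)).Reachable a b := by
  intro hr
  have hbS : b ∈ (↑U ∪ ↑A : Set V) :=
    reach_closed (fun x y hx hxy => st.side1_closed hsub hcr hx hxy)
      (Or.inr (by exact_mod_cast ha)) hr
  rcases hbS with h | h
  · exact st.bWf hb (st.hUW (by exact_mod_cast h))
  · exact Finset.disjoint_left.mp st.hAB (by exact_mod_cast h) hb


/-- The key characterization: `X ∪ F` has a small cutset iff some superset of
`C` of size `< k` makes `U` "closed". -/
lemma char :
    EGraph.HasSmallCutset k (X ∪ testF U C A B Wf) ↔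
      ∃ C₀ : Finset V, C ⊆ C₀ ∧ C₀.card < k ∧ ¬ Cross X C₀ U Wf := by
  have hk1 : (1:ℕ) ≤ k := st.hk
  constructor
  · rintro ⟨C₀, hC₀k, hcut⟩
    have hC₀le : C₀.card ≤ k := le_of_lt hC₀k
    rcases hcut with ⟨hC₀e, hnconn⟩ | ⟨hC₀ne, x, hx, y, hy, hxC₀, hyC₀, hrxy, hnr⟩
    · -- empty cutset: the union graph is disconnected
      have hCe : C = ∅ := by
        by_contra hne
        obtain ⟨c, hc⟩ := Finset.nonempty_iff_ne_empty.mpr hne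
        refine hnconn ?_
        intro u hu v hv
        have h1 := st.conn_of_c hc (Finset.notMem_empty c)
          (by simp : (∅ : Finset V).card ≤ k) hu (Finset.notMem_empty u)
        have h2 := st.conn_of_c hc (Finset.notMem_empty c)
          (by simp : (∅ : Finset V).card ≤ k) hv (Finset.notMem_empty v)
        rw [delv_empty] at h1 h2
        exact h1.trans h2.symm
      refine ⟨∅, by simp [hCe], by rw [Finset.card_empty]; omega, ?_⟩
      intro hcr
      refine hnconn ?_
      intro u hu v hv
      obtain ⟨a, haA, -⟩ := st.pickA (C₀ := ∅) (by simp)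
      have h1 := st.conn_of_cross (by simp [hCe]) (by simp) hcr haA
        (Finset.notMem_empty a) hu (Finset.notMem_empty u)
      have h2 := st.conn_of_cross (by simp [hCe]) (by simp) hcr haA
        (Finset.notMem_empty a) hv (Finset.notMem_empty v)
      rw [delv_empty] at h1 h2
      exact h1.trans h2.symm
    · -- nonempty cutset
      have hsub : C ⊆ C₀ := by
        intro c hc
        by_contra hcC₀
        exact hnr ((st.conn_of_c hc hcC₀ hC₀le hx hxC₀).trans
          (st.conn_of_c hc hcC₀ hC₀le hy hyC₀).symm)
      refine ⟨C₀, hsub, hC₀k, ?_⟩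
      intro hcr
      obtain ⟨a, haA, haC₀⟩ := st.pickA hC₀le
      exact hnr ((st.conn_of_cross hsub hC₀le hcr haA haC₀ hx hxC₀).trans
        (st.conn_of_cross hsub hC₀le hcr haA haC₀ hy hyC₀).symm)
  · rintro ⟨C₀, hsub, hC₀k, hncr⟩
    obtain ⟨a, haA, haC₀⟩ := st.pickA (le_of_lt hC₀k)
    obtain ⟨b, hbB, hbC₀⟩ := st.pickB (le_of_lt hC₀k)
    have havert := st.a_mem_vertsY haA
    have hbvert := st.b_mem_vertsY hbB
    have hnr : ¬ (EGraph.toSG ((X ∪ testF U C A B Wf).delv C₀)).Reachable a b :=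
      st.side1_sep hsub hncr haA hbB
    by_cases hCe : C = ∅
    · by_cases hcr0 : Cross X (∅ : Finset V) U Wf
      · -- C₀ is a nonempty cutset, reachability via the crossing edge
        have hC₀ne : C₀.Nonempty := by
          rcases Finset.eq_empty_or_nonempty C₀ with rfl | h
          · exact absurd hcr0 hncr
          · exact h
        obtain ⟨p, q, hpU, -, hqW, hqU, -, hpq⟩ := cross_adj hcr0
        rw [delv_empty] at hpq
        have hpW : p ∈ Wf := st.hUW hpU
        have hpC : p ∉ C := by simp [hCe]
        have hqC : q ∉ C := by simp [hCe]
        have hrab : (EGraph.toSG (X ∪ testF U C A B Wf)).Reachable a b := by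
          have h1 : (EGraph.toSG (X ∪ testF U C A B Wf)).Adj a p :=
            st.adjY_side1 (Finset.mem_union_right _ haA)
              (Finset.mem_union_left _ (Finset.mem_sdiff.mpr ⟨hpU, hpC⟩))
              (fun h => st.aWf haA (h ▸ hpW))
          have h2 : (EGraph.toSG (X ∪ testF U C A B Wf)).Adj p q := st.adjX_Y hpq
          have h3 : (EGraph.toSG (X ∪ testF U C A B Wf)).Adj q b :=
            st.adjY_side2
              (Finset.mem_union_left _
                (Finset.mem_sdiff.mpr ⟨Finset.mem_sdiff.mpr ⟨hqW, hqU⟩, hqC⟩))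
              (Finset.mem_union_right _ hbB)
              (fun h => st.bWf hbB (h ▸ hqW))
          exact (h1.reachable.trans h2.reachable).trans h3.reachable
        exact ⟨C₀, hC₀k, Or.inr ⟨hC₀ne, a, havert, b, hbvert, haC₀, hbC₀, hrab, hnr⟩⟩
      · -- the union graph itself is disconnected
        refine ⟨∅, by rw [Finset.card_empty]; omega, Or.inl ⟨rfl, ?_⟩⟩
        intro hconn
        have hr := hconn a havert b hbvert
        have : ¬ (EGraph.toSG ((X ∪ testF U C A B Wf).delv ∅)).Reachable a b :=
          st.side1_sep (by simp [hCe]) hcr0 haA hbB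
        rw [delv_empty] at this
        exact this hr
    · -- C nonempty: C₀ ⊇ C nonempty, reachability via a vertex of C
      obtain ⟨c, hc⟩ := Finset.nonempty_iff_ne_empty.mpr hCe
      have hC₀ne : C₀.Nonempty := ⟨c, hsub hc⟩
      have hrab : (EGraph.toSG (X ∪ testF U C A B Wf)).Reachable a b := by
        have h1 : (EGraph.toSG (X ∪ testF U C A B Wf)).Adj a c :=
          st.adjY_bi (Finset.mem_union_left _ haA) hc
        have h2 : (EGraph.toSG (X ∪ testF U C A B Wf)).Adj b c :=
          st.adjY_bi (Finset.mem_union_right _ hbB) hc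
        exact h1.reachable.trans h2.reachable.symm
      exact ⟨C₀, hC₀k, Or.inr ⟨hC₀ne, a, havert, b, hbvert, haC₀, hbC₀, hrab, hnr⟩⟩

end TSetup

end SC


namespace SC
variable {V : Type} [DecidableEq V]
open Finset SimpleGraph EGraph

lemma delv_inter (X : EGraph V) (C : Finset V) :
    X.delv C = X.delv (C ∩ X.verts) := by
  unfold EGraph.delv
  apply Finset.filter_congr
  intro e he
  constructor
  · intro h v hv hvi
    exact h v hv (Finset.mem_inter.mp hvi).1
  · intro h v hv hvC
    exact h v hv (Finset.mem_inter.mpr ⟨hvC, mem_verts.mpr ⟨e, he, hv⟩⟩)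

lemma cutset_transfer {Y Z : EGraph V} {k : ℕ} (hk : 1 ≤ k)
    (hv : Y.verts = Z.verts)
    (hR : ∀ C : Finset V, C.card < k → ∀ x y,
      (EGraph.toSG (Y.delv C)).Reachable x y ↔ (EGraph.toSG (Z.delv C)).Reachable x y)
    (h : EGraph.HasSmallCutset k Y) : EGraph.HasSmallCutset k Z := by
  have hR0 : ∀ x y, (EGraph.toSG Y).Reachable x y ↔ (EGraph.toSG Z).Reachable x y := by
    intro x y
    have := hR ∅ hk x y
    rwa [delv_empty, delv_empty] at this
  have hconn : EGraph.Conn Y ↔ EGraph.Conn Z := by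
    unfold EGraph.Conn
    rw [hv]
    exact forall₂_congr fun u _ => forall₂_congr fun v _ => hR0 u v
  obtain ⟨C₀, hC₀k, hcut⟩ := h
  refine ⟨C₀, hC₀k, ?_⟩
  rcases hcut with ⟨he, hnc⟩ | ⟨hne, x, hx, y, hy, hxC, hyC, hr, hnr⟩
  · exact Or.inl ⟨he, fun c => hnc (hconn.mpr c)⟩
  · exact Or.inr ⟨hne, x, hv ▸ hx, y, hv ▸ hy, hxC, hyC, (hR0 x y).mp hr,
      fun c => hnr ((hR C₀ hC₀k x y).mpr c)⟩

end SC

theorem stmt19 {V : Type} [Countable V] [Infinite V] [DecidableEq V]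
    (k : ℕ) (hk : 1 ≤ k) (G H : EGraph V) :
    (∀ F : EGraph V,
        (EGraph.HasSmallCutset k (G ∪ F) ↔ EGraph.HasSmallCutset k (H ∪ F))) ↔
      (EGraph.verts G = EGraph.verts H ∧
        ∀ C : Finset V, C ⊆ EGraph.verts G → C.card < k →
          EGraph.compSets (EGraph.delv G C) = EGraph.compSets (EGraph.delv H C)) := by
  classical
  set Wf : Finset V := G.verts ∪ H.verts with hWf
  have hGW : G.verts ⊆ Wf := Finset.subset_union_left
  have hHW : H.verts ⊆ Wf := Finset.subset_union_right
  constructor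
  · intro Hyp
    -- Step 1: crossing-predicate agreement for all C of size < k
    have key : ∀ C U : Finset V, U ⊆ Wf → C.card < k →
        (SC.Cross G C U Wf ↔ SC.Cross H C U Wf) := by
      intro C U hUW hCk
      obtain ⟨D, hD, hDcard⟩ := SC.exists_disjoint_card (Wf ∪ C) (k - 1 - C.card)
      have hDW : Disjoint D Wf := hD.mono_right Finset.subset_union_left
      have hDC : Disjoint C D :=
        (hD.mono_right Finset.subset_union_right).symm
      set C' : Finset V := C ∪ D with hC'
      have hC'card : C'.card = k - 1 := by
        rw [hC', Finset.card_union_of_disjoint hDC, hDcard]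
        omega
      obtain ⟨A, hA, hAcard⟩ := SC.exists_disjoint_card (Wf ∪ C') (k + 1)
      obtain ⟨B, hB, hBcard⟩ := SC.exists_disjoint_card (Wf ∪ C' ∪ A) (k + 1)
      have hB' : Disjoint B (Wf ∪ C') := hB.mono_right Finset.subset_union_left
      have hAB : Disjoint A B := (hB.mono_right Finset.subset_union_right).symm
      have stG : SC.TSetup k G Wf U C' A B :=
        ⟨hk, hGW, hUW, hA, hB', hAB, hAcard, hBcard⟩
      have stH : SC.TSetup k H Wf U C' A B :=
        ⟨hk, hHW, hUW, hA, hB', hAB, hAcard, hBcard⟩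
      have hiff := Hyp (SC.testF U C' A B Wf)
      rw [stG.char, stH.char] at hiff
      have force : ∀ X : EGraph V,
          (∃ C₀, C' ⊆ C₀ ∧ C₀.card < k ∧ ¬ SC.Cross X C₀ U Wf) ↔
            ¬ SC.Cross X C' U Wf := by
        intro X
        constructor
        · rintro ⟨C₀, hs, hcard, hncr⟩
          have hle : C₀.card ≤ C'.card := by omega
          have : C' = C₀ := Finset.eq_of_subset_of_card_le hs hle
          exact this ▸ hncr
        · intro h
          exact ⟨C', subset_refl _, by omega, h⟩
      rw [force G, force H] at hiff
      have e1 : SC.Cross G C' U Wf ↔ SC.Cross G C U Wf := SC.cross_pad hUW hDW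
      have e2 : SC.Cross H C' U Wf ↔ SC.Cross H C U Wf := SC.cross_pad hUW hDW
      rw [e1, e2] at hiff
      exact not_iff_not.mp hiff
    -- Step 2: vertex sets agree
    have hverts : G.verts = H.verts := by
      ext u
      by_cases huW : u ∈ Wf
      · have hu : ({u} : Finset V) ⊆ Wf := Finset.singleton_subset_iff.mpr huW
        have h1 : u ∈ G.verts ↔ SC.Cross G ∅ {u} Wf := by
          have := SC.mem_verts_delv_iff (C := (∅ : Finset V)) hGW (u := u)
          rw [SC.delv_empty] at this
          simpa using this
        have h2 : u ∈ H.verts ↔ SC.Cross H ∅ {u} Wf := by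
          have := SC.mem_verts_delv_iff (C := (∅ : Finset V)) hHW (u := u)
          rw [SC.delv_empty] at this
          simpa using this
        rw [h1, h2]
        exact key ∅ {u} hu (by rw [Finset.card_empty]; omega)
      · constructor
        · intro h; exact absurd (hGW h) huW
        · intro h; exact absurd (hHW h) huW
    refine ⟨hverts, ?_⟩
    -- Step 3: component sets agree after deleting any small C
    intro C hCsub hCk
    have hvd : (G.delv C).verts = (H.delv C).verts := by
      ext u
      by_cases huW : u ∈ Wf
      · have hu : ({u} : Finset V) ⊆ Wf := Finset.singleton_subset_iff.mpr huW
        rw [SC.mem_verts_delv_iff hGW, SC.mem_verts_delv_iff hHW]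
        rw [key C {u} hu hCk]
      · constructor
        · intro h; exact absurd (hGW (SC.verts_delv_subset _ _ h)) huW
        · intro h; exact absurd (hHW (SC.verts_delv_subset _ _ h)) huW
    refine SC.compSets_congr hvd ?_
    intro x y
    by_cases hxy : x = y
    · subst hxy
      exact iff_of_true (SimpleGraph.Reachable.refl x) (SimpleGraph.Reachable.refl x)
    · rw [SC.reach_delv_iff hGW hxy, SC.reach_delv_iff hHW hxy, hvd]
      constructor
      · rintro ⟨h1, h2, h3⟩
        refine ⟨h1, h2, ?_⟩
        intro U hUW hncr
        exact h3 U hUW (fun c => hncr ((key C U hUW hCk).mp c))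
      · rintro ⟨h1, h2, h3⟩
        refine ⟨h1, h2, ?_⟩
        intro U hUW hncr
        exact h3 U hUW (fun c => hncr ((key C U hUW hCk).mpr c))
  · rintro ⟨hverts, hcomp⟩ F
    -- reachability agreement for every deletion of size < k
    have hR : ∀ C : Finset V, C.card < k → ∀ x y,
        (EGraph.toSG (G.delv C)).Reachable x y ↔
          (EGraph.toSG (H.delv C)).Reachable x y := by
      intro C hCk x y
      have hd1 : G.delv C = G.delv (C ∩ G.verts) := SC.delv_inter G C
      have hd2 : H.delv C = H.delv (C ∩ G.verts) := by
        rw [SC.delv_inter H C, hverts]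
      have hcard : (C ∩ G.verts).card < k :=
        lt_of_le_of_lt (Finset.card_le_card Finset.inter_subset_left) hCk
      have hcs := hcomp (C ∩ G.verts) Finset.inter_subset_right hcard
      rw [hd1, hd2, SC.reach_iff_compSets, SC.reach_iff_compSets, hcs]
    have hvU : (G ∪ F).verts = (H ∪ F).verts := by
      rw [SC.verts_union, SC.verts_union, hverts]
    have hRU : ∀ C₀ : Finset V, C₀.card < k → ∀ x y,
        (EGraph.toSG ((G ∪ F).delv C₀)).Reachable x y ↔
          (EGraph.toSG ((H ∪ F).delv C₀)).Reachable x y := by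
      intro C₀ hC₀ x y
      rw [SC.delv_union, SC.delv_union]
      exact SC.reach_union_congr (hR C₀ hC₀) x y
    constructor
    · exact SC.cutset_transfer hk hvU hRU
    · exact SC.cutset_transfer hk hvU.symm
        (fun C hC x y => (hRU C hC x y).symm)
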